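/- arXiv:2001.00061 — 2 statements merged into one kernel-verified Lean document; each statement's English description precedes it below -/
import Mathlib

section
/- In the setting of the Darboux transformation: if φ solves −φ″ + (V − λ)φ = 0, φ₀ := φ(·, λ₀) solves the same equation with λ = λ₀ and has no zeros, and φ̂(x, λ) := (λ₀ − λ)^{−1}(φ′(x,λ) − (φ₀′(x)/φ₀(x))φ(x,λ)) for λ ≠ λ₀, then the identities (φ̂(x, λ) φ₀(x))′ = φ(x, λ) φ₀(x) and (φ(x, λ)/φ₀(x))′ = (λ₀ − λ) φ̂(x, λ)/φ₀(x) hold on (0, π). -/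
/-- with `φ` a solution of `−φ″ + (V − λ)φ = 0`, `φ₀` a nonvanishing
solution at `λ₀`, and `φ̂(x) := (λ₀ − λ)⁻¹(φ′(x) − (φ₀′(x)/φ₀(x))φ(x))` for `λ ≠ λ₀`,
the identities `(φ̂ φ₀)′ = φ φ₀` and `(φ/φ₀)′ = (λ₀ − λ) φ̂/φ₀` hold on `(0,π)`. -/
theorem darboux_transform_identities
    (V : ℝ → ℝ) (lam lam0 : ℝ) (hne : lam ≠ lam0) (φ φ0 : ℝ → ℝ)
    (hφd : ∀ x ∈ Set.Ioo 0 Real.pi, DifferentiableAt ℝ φ x)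
    (hφ : ∀ x ∈ Set.Ioo 0 Real.pi, HasDerivAt (deriv φ) ((V x - lam) * φ x) x)
    (hφ0d : ∀ x ∈ Set.Ioo 0 Real.pi, DifferentiableAt ℝ φ0 x)
    (hφ0 : ∀ x ∈ Set.Ioo 0 Real.pi, HasDerivAt (deriv φ0) ((V x - lam0) * φ0 x) x)
    (hnz : ∀ x ∈ Set.Ioo 0 Real.pi, φ0 x ≠ 0) :
    ∀ x ∈ Set.Ioo 0 Real.pi,
      HasDerivAt
        (fun t => ((lam0 - lam)⁻¹ * (deriv φ t - deriv φ0 t / φ0 t * φ t)) * φ0 t)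
        (φ x * φ0 x) x ∧
      HasDerivAt (fun t => φ t / φ0 t)
        ((lam0 - lam) *
          ((lam0 - lam)⁻¹ * (deriv φ x - deriv φ0 x / φ0 x * φ x)) / φ0 x) x := by
  intro x hx
  have hc : lam0 - lam ≠ 0 := sub_ne_zero.mpr (Ne.symm hne)
  have hx0 := hnz x hx
  have hφx : HasDerivAt φ (deriv φ x) x := (hφd x hx).hasDerivAt
  have hφ0x : HasDerivAt φ0 (deriv φ0 x) x := (hφ0d x hx).hasDerivAt
  have hφ'x := hφ x hx
  have hφ0'x := hφ0 x hx
  constructor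
  · have hg : HasDerivAt
        (fun t => (lam0 - lam)⁻¹ * (deriv φ t * φ0 t - deriv φ0 t * φ t))
        ((lam0 - lam)⁻¹ * (((V x - lam) * φ x * φ0 x + deriv φ x * deriv φ0 x) -
          ((V x - lam0) * φ0 x * φ x + deriv φ0 x * deriv φ x))) x :=
      HasDerivAt.const_mul _ ((hφ'x.mul hφ0x).sub (hφ0'x.mul hφx))
    have heq : (fun t => ((lam0 - lam)⁻¹ * (deriv φ t - deriv φ0 t / φ0 t * φ t)) * φ0 t)
        =ᶠ[nhds x] fun t => (lam0 - lam)⁻¹ * (deriv φ t * φ0 t - deriv φ0 t * φ t) := by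
      filter_upwards [isOpen_Ioo.mem_nhds hx] with t ht
      field_simp [hnz t ht]
    have := hg.congr_of_eventuallyEq heq
    refine this.congr_deriv ?_
    field_simp
    ring
  · have := hφx.div hφ0x hx0
    refine this.congr_deriv ?_
    field_simp
end

section
/- Define Trace-shift: let a ∈ ℝ with 2a ∈ ℤ, b ∈ ℝ, λ₀ ∈ ℝ, and let {λ_n}_{n≥1} be a real sequence with √λ_n = (n−1) − (a−1) + b/(n) + ℓ₂(1/n²)-type asymptotics making both series below converge. Set T := Σ_{n<a} λ_n + Σ_{n=a}(λ_n − b) + Σ_{n>a}(λ_n − (n−a)² − 2b) over n ≥ 0 for the sequence {λ_n}_{n≥0}, and T̂ the analogous sum for the shifted sequence λ̂_n := λ_{n+1} with â := a − 1 and the same b. Then T̂ = T − λ₀ + (a² + 2b)·1_{(−∞,0)}(a) + b·1_{{0}}(a). -/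
/-- with `T := ∑_{n<a} λ_n + ∑_{n=a}(λ_n − b) + ∑_{n>a}(λ_n − (n−a)² − 2b)`
and `T̂` the analogous regularized sum for the shifted sequence `λ̂_n := λ_{n+1}` with
`â := a − 1` and the same `b` (both series assumed summable), one has
`T̂ = T − λ₀ + (a² + 2b)·1_{(−∞,0)}(a) + b·1_{{0}}(a)`. -/
theorem regularized_trace_shift
    (a b : ℝ) (ha : ∃ m : ℤ, 2 * a = (m : ℝ)) (lam : ℕ → ℝ)
    (hT : Summable fun n : ℕ =>
      if (n : ℝ) < a then lam n
      else if (n : ℝ) = a then lam n - b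
      else lam n - ((n : ℝ) - a) ^ 2 - 2 * b)
    (hThat : Summable fun n : ℕ =>
      if (n : ℝ) < a - 1 then lam (n + 1)
      else if (n : ℝ) = a - 1 then lam (n + 1) - b
      else lam (n + 1) - ((n : ℝ) - (a - 1)) ^ 2 - 2 * b) :
    (∑' n : ℕ,
      (if (n : ℝ) < a - 1 then lam (n + 1)
       else if (n : ℝ) = a - 1 then lam (n + 1) - b
       else lam (n + 1) - ((n : ℝ) - (a - 1)) ^ 2 - 2 * b)) =
    (∑' n : ℕ,
      (if (n : ℝ) < a then lam n
       else if (n : ℝ) = a then lam n - b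
       else lam n - ((n : ℝ) - a) ^ 2 - 2 * b))
      - lam 0 + (a ^ 2 + 2 * b) * (if a < 0 then 1 else 0)
      + b * (if a = 0 then 1 else 0) := by
  set f : ℕ → ℝ := fun n : ℕ =>
      if (n : ℝ) < a then lam n
      else if (n : ℝ) = a then lam n - b
      else lam n - ((n : ℝ) - a) ^ 2 - 2 * b with hf
  have key : ∀ n : ℕ,
      (if (n : ℝ) < a - 1 then lam (n + 1)
       else if (n : ℝ) = a - 1 then lam (n + 1) - b
       else lam (n + 1) - ((n : ℝ) - (a - 1)) ^ 2 - 2 * b) = f (n + 1) := by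
    intro n
    have h1 : ((n : ℝ) < a - 1) ↔ (((n + 1 : ℕ) : ℝ) < a) := by push_cast; constructor <;> intro <;> linarith
    have h2 : ((n : ℝ) = a - 1) ↔ (((n + 1 : ℕ) : ℝ) = a) := by push_cast; constructor <;> intro <;> linarith
    have h3 : (n : ℝ) - (a - 1) = ((n + 1 : ℕ) : ℝ) - a := by push_cast; ring
    simp only [hf, h3]
    by_cases hc1 : ((n + 1 : ℕ) : ℝ) < a
    · rw [if_pos (h1.mpr hc1), if_pos hc1]
    · rw [if_neg (fun h => hc1 (h1.mp h)), if_neg hc1]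
      by_cases hc2 : ((n + 1 : ℕ) : ℝ) = a
      · rw [if_pos (h2.mpr hc2), if_pos hc2]
      · rw [if_neg (fun h => hc2 (h2.mp h)), if_neg hc2]
  have hsum : Summable f := hT
  have hzero : (∑' n : ℕ, f n) = f 0 + ∑' n : ℕ, f (n + 1) := Summable.tsum_eq_zero_add hsum
  calc (∑' n : ℕ,
      (if (n : ℝ) < a - 1 then lam (n + 1)
       else if (n : ℝ) = a - 1 then lam (n + 1) - b
       else lam (n + 1) - ((n : ℝ) - (a - 1)) ^ 2 - 2 * b))
      = ∑' n : ℕ, f (n + 1) := by exact tsum_congr key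
    _ = (∑' n : ℕ, f n) - f 0 := by rw [hzero]; ring
    _ = (∑' n : ℕ, f n) - lam 0 + (a ^ 2 + 2 * b) * (if a < 0 then 1 else 0)
        + b * (if a = 0 then 1 else 0) := by
        have : ((0 : ℕ) : ℝ) = 0 := by norm_num
        simp only [hf, this]
        rcases lt_trichotomy a 0 with h | h | h
        · rw [if_neg (by linarith : ¬ (0:ℝ) < a), if_neg (by linarith : ¬ (0:ℝ) = a),
            if_pos h, if_neg (by linarith : ¬ a = 0)]
          ring
        · rw [if_neg (by linarith : ¬ (0:ℝ) < a), if_pos h.symm,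
            if_neg (by linarith : ¬ a < 0), if_pos h]
          ring
        · rw [if_pos h, if_neg (by linarith : ¬ a < 0), if_neg (by linarith : ¬ a = 0)]
          ring
end
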